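/- Suppose polynomials q_p (indexed by a set of polynomials P), q_u (indexed by universal variables u) and q over the rationals satisfy the identity Σ_p q_p·p + Σ_u q_u·(1-2u) + q + 1 = 0, where each q_u depends only on variables quantified before u, each p in P vanishes on every assignment produced by the existential winning strategy, and q is non-negative on all Boolean assignments. Then the existential player has no winning strategy; i.e., no such identity exists if the QBF is true. (Soundness of Q-SOS/Q-SA/Q-NS.) -/
import Mathlib

open MvPolynomial

/-- The rational value of a Boolean. -/
noncomputable def bval (b : Bool) : ℚ := if b then 1 else 0

/-- The play resulting from existential strategy `σ` and universal assignment `τ`. -/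
def play {n : ℕ} (E : Fin n → Prop) [DecidablePred E]
    (σ : Fin n → (Fin n → Bool) → Bool) (τ : Fin n → Bool) (i : Fin n) : Bool :=
  if E i then σ i (fun j => if _h : j < i then play E σ τ j else false) else τ i
termination_by (i : ℕ)
decreasing_by exact _h

lemma play_congr {n : ℕ} (E : Fin n → Prop) [DecidablePred E]
    (σ : Fin n → (Fin n → Bool) → Bool) (τ τ' : Fin n → Bool) (k : Fin n)
    (hττ' : ∀ j : Fin n, j < k → τ j = τ' j) :
    ∀ j : Fin n, j < k → play E σ τ j = play E σ τ' j := by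
  suffices H : ∀ m : ℕ, ∀ j : Fin n, (j : ℕ) < m → j < k → play E σ τ j = play E σ τ' j from
    fun j => H ((j : ℕ) + 1) j (Nat.lt_succ_self _)
  intro m
  induction m with
  | zero => intro j hj; omega
  | succ m ih =>
    intro j hjm hj
    rw [play, play]
    by_cases hE : E j
    · simp only [hE, if_true]
      congr 1
      funext l
      by_cases hl : l < j
      · simp only [hl, dif_pos]
        exact ih l (by omega) (lt_trans hl hj)
      · simp [hl]
    · simp only [hE, if_false]
      exact hττ' j hj

lemma play_spec {n : ℕ} (E : Fin n → Prop) [DecidablePred E]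
    (σ : Fin n → (Fin n → Bool) → Bool)
    (hσ : ∀ i : Fin n, ∀ α α' : Fin n → Bool, (∀ j, j < i → α j = α' j) → σ i α = σ i α')
    (τ : Fin n → Bool) (i : Fin n) (hE : E i) :
    play E σ τ i = σ i (play E σ τ) := by
  rw [play]
  simp only [hE, if_true]
  apply hσ
  intro j hj
  simp [hj]

theorem stmt_5 (n : ℕ) (E : Fin n → Prop) [DecidablePred E]
    (P : Finset (MvPolynomial (Fin n) ℚ))
    (qp : MvPolynomial (Fin n) ℚ → MvPolynomial (Fin n) ℚ)
    (qu : Fin n → MvPolynomial (Fin n) ℚ)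
    (q : MvPolynomial (Fin n) ℚ)
    (hvars : ∀ u : Fin n, ¬ E u → ∀ v ∈ (qu u).vars, v < u)
    (hq : ∀ α : Fin n → Bool, 0 ≤ eval (fun i => bval (α i)) q)
    (hid : ∑ p ∈ P, qp p * p
        + ∑ u ∈ Finset.univ.filter (fun u => ¬ E u), qu u * (1 - 2 * X u)
        + q + 1 = 0) :
    ¬ ∃ σ : Fin n → (Fin n → Bool) → Bool,
        (∀ i : Fin n, ∀ α α' : Fin n → Bool, (∀ j, j < i → α j = α' j) → σ i α = σ i α') ∧
        (∀ α : Fin n → Bool, (∀ i, E i → α i = σ i α) →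
          ∀ p ∈ P, eval (fun i => bval (α i)) p = 0) := by
  rintro ⟨σ, hσ, hwin⟩
  -- evaluate the identity at each play and sum over τ
  set x : (Fin n → Bool) → Fin n → ℚ := fun τ i => bval (play E σ τ i) with hx
  have hplay : ∀ τ, ∀ i, E i → play E σ τ i = σ i (play E σ τ) :=
    fun τ i hE => play_spec E σ hσ τ i hE
  have hP : ∀ τ, ∀ p ∈ P, eval (x τ) p = 0 := fun τ => hwin (play E σ τ) (hplay τ)
  -- the key cancellation for universal variables
  have huniv : ∀ u : Fin n, ¬ E u →
      ∑ τ : Fin n → Bool, eval (x τ) (qu u) * (1 - 2 * x τ u) = 0 := by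
    intro u hEu
    apply Finset.sum_ninvolution (fun τ => Function.update τ u (!τ u))
    · intro τ
      have hagree : ∀ j : Fin n, j < u → τ j = Function.update τ u (!τ u) j := by
        intro j hj
        rw [Function.update_of_ne (ne_of_lt hj)]
      have h1 : eval (x τ) (qu u) = eval (x (Function.update τ u (!τ u))) (qu u) := by
        apply eval₂_congr
        intro i c hic hcoeff
        have hiv : i ∈ (qu u).vars := (mem_vars i).mpr ⟨c, by
          rw [mem_support_iff]; exact hcoeff, hic⟩
        have hi : i < u := hvars u hEu i hiv
        simp only [hx]
        congr 1
        exact play_congr E σ τ _ u hagree i hi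
      have h2 : x τ u = bval (τ u) := by
        simp only [hx]
        rw [play]
        simp [hEu]
      have h3 : x (Function.update τ u (!τ u)) u = bval (!τ u) := by
        simp only [hx]
        rw [play]
        simp [hEu]
      rw [h1, h2, h3]
      ring_nf
      cases τ u <;> simp [bval]
    · intro τ _
      intro hcon
      have := congrFun hcon u
      simp [Function.update_self] at this
    · intro τ; exact Finset.mem_univ _
    · intro τ
      funext j
      by_cases hj : j = u
      · subst hj; simp
      · simp [Function.update_of_ne hj]
  -- sum the evaluated identity
  have key : ∀ τ : Fin n → Bool,
      (∑ p ∈ P, eval (x τ) (qp p) * eval (x τ) p)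
      + (∑ u ∈ Finset.univ.filter (fun u => ¬ E u), eval (x τ) (qu u) * (1 - 2 * x τ u))
      + eval (x τ) q + 1 = 0 := by
    intro τ
    have := congrArg (eval (x τ)) hid
    simpa [map_sum, map_add, map_mul, map_sub, map_one, map_ofNat] using this
  have hsum : ∑ τ : Fin n → Bool,
      ((∑ p ∈ P, eval (x τ) (qp p) * eval (x τ) p)
      + (∑ u ∈ Finset.univ.filter (fun u => ¬ E u), eval (x τ) (qu u) * (1 - 2 * x τ u))
      + eval (x τ) q + 1) = 0 := Finset.sum_eq_zero (fun τ _ => key τ)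
  -- compute each piece
  have e1 : ∀ τ : Fin n → Bool, (∑ p ∈ P, eval (x τ) (qp p) * eval (x τ) p) = 0 := by
    intro τ
    apply Finset.sum_eq_zero
    intro p hp
    rw [hP τ p hp, mul_zero]
  have e2 : ∑ τ : Fin n → Bool,
      (∑ u ∈ Finset.univ.filter (fun u => ¬ E u), eval (x τ) (qu u) * (1 - 2 * x τ u)) = 0 := by
    rw [Finset.sum_comm]
    apply Finset.sum_eq_zero
    intro u hu
    rw [Finset.mem_filter] at hu
    exact huniv u hu.2
  have hqsum : 0 ≤ ∑ τ : Fin n → Bool, eval (x τ) q :=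
    Finset.sum_nonneg (fun τ _ => hq (play E σ τ))
  have hcard : (0:ℚ) < (Finset.univ : Finset (Fin n → Bool)).card := by
    have : (Finset.univ : Finset (Fin n → Bool)).card = 2 ^ n := by
      simp [Finset.card_univ]
    rw [this]
    positivity
  have : (0:ℚ) < ∑ τ : Fin n → Bool,
      ((∑ p ∈ P, eval (x τ) (qp p) * eval (x τ) p)
      + (∑ u ∈ Finset.univ.filter (fun u => ¬ E u), eval (x τ) (qu u) * (1 - 2 * x τ u))
      + eval (x τ) q + 1) := by
    simp only [Finset.sum_add_distrib, e2, Finset.sum_const, nsmul_eq_mul, mul_one]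
    have : ∑ τ : Fin n → Bool, (∑ p ∈ P, eval (x τ) (qp p) * eval (x τ) p) = 0 :=
      Finset.sum_eq_zero (fun τ _ => e1 τ)
    rw [this]
    simp only [zero_add, add_zero]
    calc (0:ℚ) < (Finset.univ : Finset (Fin n → Bool)).card := hcard
    _ ≤ _ := by linarith [hqsum]
  rw [hsum] at this
  exact lt_irrefl 0 this
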